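/- Let j ≥ 1 be an integer and let k and r be positive integers with p(j) | k. Then Σ_{d | r, (d,k)=1} (μ²(d)/φ_j(d)) 𝔖_{j+1}(dk) = 𝔖_{j+1}(rk). -/

import Mathlib

open Finset

/-- `p(j) = j` if `j` is prime, and `1` otherwise. -/
def pFun (j : ℕ) : ℕ := if j.Prime then j else 1

/-- `φ_j(n) = ∏_{p ∣ n} (p - j)`, the multiplicative extension of `φ_j(p) = p - j`
to squarefree numbers (as a real number). -/
noncomputable def phij (j n : ℕ) : ℝ := ∏ p ∈ n.primeFactors, ((p : ℝ) - (j : ℝ))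

/-- `H_j(n) = ∏_{p ∣ n, p ≠ j-1, p ≠ j} (1 + 1/(p - j))`. -/
noncomputable def Hj (j n : ℕ) : ℝ :=
  ∏ p ∈ n.primeFactors.filter (fun p => p ≠ j - 1 ∧ p ≠ j), (1 + 1 / ((p : ℝ) - (j : ℝ)))

/-- `G_j(n) = ∏_{p ∣ n, p = j-1 or p = j} p/(p-1)`. -/
noncomputable def Gj (j n : ℕ) : ℝ :=
  ∏ p ∈ n.primeFactors.filter (fun p => p = j - 1 ∨ p = j), ((p : ℝ) / ((p : ℝ) - 1))

/-- `C_j = ∏_{p ≠ j-1, p ≠ j} (1 - (j-1)/((p-1)(p-j+1)))`. -/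
noncomputable def Cj (j : ℕ) : ℝ :=
  ∏' p : Nat.Primes,
    if (p : ℕ) ≠ j - 1 ∧ (p : ℕ) ≠ j then
      1 - ((j : ℝ) - 1) / ((((p : ℕ) : ℝ) - 1) * (((p : ℕ) : ℝ) - (j : ℝ) + 1))
    else 1

/-- The singular series `𝔖_j(n) = C_j G_j(n) H_j(n)` if `p(j) ∣ n`, and `0` otherwise. -/
noncomputable def SSj (j n : ℕ) : ℝ := if pFun j ∣ n then Cj j * Gj j n * Hj j n else 0

/-- local factor -/
noncomputable def locF (j p : ℕ) : ℝ :=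
  if p = j ∨ p = j + 1 then (p : ℝ) / ((p : ℝ) - 1) else 1 + 1 / ((p : ℝ) - (j + 1 : ℕ))

lemma GH_eq (j n : ℕ) :
    Gj (j + 1) n * Hj (j + 1) n = ∏ p ∈ n.primeFactors, locF j p := by
  classical
  rw [← Finset.prod_filter_mul_prod_filter_not n.primeFactors
    (fun p => p = j ∨ p = j + 1) (locF j)]
  congr 1
  · unfold Gj
    rw [show (j + 1) - 1 = j from rfl]
    exact Finset.prod_congr rfl fun p hp => by
      rw [Finset.mem_filter] at hp
      simp [locF, hp.2]
  · unfold Hj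
    rw [show (j + 1) - 1 = j from rfl]
    have : n.primeFactors.filter (fun p => p ≠ j ∧ p ≠ j + 1)
        = n.primeFactors.filter (fun p => ¬(p = j ∨ p = j + 1)) := by
      apply Finset.filter_congr; intro p _; tauto
    rw [this]
    exact (Finset.prod_congr rfl fun p hp => by
      rw [Finset.mem_filter] at hp
      simp [locF, hp.2]).symm

lemma SSj_eq (j n : ℕ) :
    SSj (j + 1) n = (if pFun (j + 1) ∣ n then (1 : ℝ) else 0) * Cj (j + 1)
      * ∏ p ∈ n.primeFactors, locF j p := by
  unfold SSj
  split
  · rw [mul_assoc, GH_eq, one_mul]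
  · simp

lemma squarefree_prod_primes {S : Finset ℕ} (h : ∀ p ∈ S, p.Prime) :
    Squarefree (∏ p ∈ S, p) := by
  classical
  induction S using Finset.induction_on with
  | empty => simp
  | @insert a s hnotmem ih =>
    rw [Finset.prod_insert hnotmem]
    have hap : a.Prime := h a (Finset.mem_insert_self a s)
    have hsp : ∀ p ∈ s, p.Prime := fun p hp => h p (Finset.mem_insert_of_mem hp)
    have hcop : Nat.Coprime a (∏ p ∈ s, p) := by
      rw [Nat.Prime.coprime_iff_not_dvd hap, Prime.dvd_finset_prod_iff hap.prime]
      rintro ⟨p, hp, hdvd⟩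
      exact hnotmem (((Nat.prime_dvd_prime_iff_eq hap (hsp p hp)).mp hdvd) ▸ hp)
    exact (Nat.squarefree_mul hcop).mpr ⟨hap.squarefree, ih hsp⟩

theorem divisor_sum_singular_series (j : ℕ) (hj1 : 1 ≤ j) (k r : ℕ) (hk : 0 < k)
    (hr : 0 < r) (hpk : pFun j ∣ k) :
    ∑ d ∈ r.divisors.filter (fun d => Nat.Coprime d k),
      ((ArithmeticFunction.moebius d : ℤ) : ℝ) ^ 2 / phij j d * SSj (j + 1) (d * k)
      = SSj (j + 1) (r * k) := by
  classical
  set q := pFun (j + 1) with hqdef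
  set K := k.primeFactors with hKdef
  set P := r.primeFactors \ K with hPdef
  have hrk : r * k ≠ 0 := Nat.mul_ne_zero hr.ne' hk.ne'
  by_cases hqrk : q ∣ r * k
  swap
  · -- everything vanishes
    rw [SSj, if_neg hqrk]
    apply Finset.sum_eq_zero
    intro d hd
    rw [Finset.mem_filter, Nat.mem_divisors] at hd
    have : ¬ q ∣ d * k := fun h => hqrk (h.trans (mul_dvd_mul_right hd.1.1 k))
    rw [SSj, if_neg this, mul_zero]
  -- main case
  have hPprime : ∀ p ∈ P, p.Prime := fun p hp =>
    Nat.prime_of_mem_primeFactors (Finset.mem_sdiff.mp hp).1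
  have hPk : ∀ p ∈ P, ¬ p ∣ k := by
    intro p hp hdvd
    exact (Finset.mem_sdiff.mp hp).2
      (Nat.mem_primeFactors.mpr ⟨hPprime p hp, hdvd, hk.ne'⟩)
  -- b function
  set b : ℕ → ℝ := fun p => if p = j + 1 ∧ ¬ q ∣ k then 0 else 1 with hbdef
  -- step 1 : restrict to squarefree divisors
  have step1 : ∑ d ∈ r.divisors.filter (fun d => Nat.Coprime d k),
      ((ArithmeticFunction.moebius d : ℤ) : ℝ) ^ 2 / phij j d * SSj (j + 1) (d * k)
      = ∑ d ∈ r.divisors.filter (fun d => Nat.Coprime d k ∧ Squarefree d),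
      ((ArithmeticFunction.moebius d : ℤ) : ℝ) ^ 2 / phij j d * SSj (j + 1) (d * k) := by
    refine (Finset.sum_subset ?_ ?_).symm
    · intro d hd
      rw [Finset.mem_filter] at hd ⊢
      exact ⟨hd.1, hd.2.1⟩
    · intro d hd hnd
      have hsq : ¬ Squarefree d := by
        rw [Finset.mem_filter] at hd hnd
        intro h; exact hnd ⟨hd.1, hd.2, h⟩
      rw [ArithmeticFunction.moebius_eq_zero_of_not_squarefree hsq]
      norm_num
  rw [step1]
  -- step 2 : bijection with powerset of P
  have step2 : ∑ d ∈ r.divisors.filter (fun d => Nat.Coprime d k ∧ Squarefree d),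
      ((ArithmeticFunction.moebius d : ℤ) : ℝ) ^ 2 / phij j d * SSj (j + 1) (d * k)
      = ∑ S ∈ P.powerset,
      ((ArithmeticFunction.moebius (∏ p ∈ S, p) : ℤ) : ℝ) ^ 2 / phij j (∏ p ∈ S, p)
        * SSj (j + 1) ((∏ p ∈ S, p) * k) := by
    refine Finset.sum_nbij' (fun d => d.primeFactors) (fun S => ∏ p ∈ S, p) ?_ ?_ ?_ ?_ ?_
    · intro d hd
      rw [Finset.mem_filter, Nat.mem_divisors] at hd
      rw [Finset.mem_powerset, hPdef]
      intro p hp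
      rw [Finset.mem_sdiff]
      constructor
      · exact Nat.primeFactors_mono hd.1.1 hr.ne' hp
      · intro hpK
        have hpp := Nat.prime_of_mem_primeFactors hp
        have h1 : p ∣ Nat.gcd d k :=
          Nat.dvd_gcd (Nat.dvd_of_mem_primeFactors hp) (Nat.dvd_of_mem_primeFactors hpK)
        rw [hd.2.1] at h1
        rw [Nat.dvd_one] at h1
        exact hpp.ne_one h1
    · intro S hS
      rw [Finset.mem_powerset] at hS
      have hSp : ∀ p ∈ S, p.Prime := fun p hp => hPprime p (hS hp)
      rw [Finset.mem_filter, Nat.mem_divisors]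
      refine ⟨⟨Finset.prod_primes_dvd r (fun p hp => (hSp p hp).prime)
        (fun p hp => Nat.dvd_of_mem_primeFactors (Finset.mem_sdiff.mp (hS hp)).1), hr.ne'⟩, ?_, ?_⟩
      · apply Nat.Coprime.prod_left
        intro p hp
        exact (Nat.Prime.coprime_iff_not_dvd (hSp p hp)).mpr (hPk p (hS hp))
      · exact squarefree_prod_primes hSp
    · intro d hd
      rw [Finset.mem_filter] at hd
      exact Nat.prod_primeFactors_of_squarefree hd.2.2
    · intro S hS
      rw [Finset.mem_powerset] at hS
      exact Nat.primeFactors_prod (fun p hp => hPprime p (hS hp))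
    · intro d hd
      rw [Finset.mem_filter] at hd
      rw [Nat.prod_primeFactors_of_squarefree hd.2.2]
  rw [step2]
  -- step 3 : evaluate each term
  have hdisjPK : Disjoint P K := Finset.sdiff_disjoint
  have step3 : ∀ S ∈ P.powerset,
      ((ArithmeticFunction.moebius (∏ p ∈ S, p) : ℤ) : ℝ) ^ 2 / phij j (∏ p ∈ S, p)
        * SSj (j + 1) ((∏ p ∈ S, p) * k)
      = (Cj (j + 1) * ∏ p ∈ K, locF j p)
        * ((∏ p ∈ S, (locF j p / ((p : ℝ) - (j : ℝ)))) * ∏ p ∈ P \ S, b p) := by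
    intro S hS
    rw [Finset.mem_powerset] at hS
    have hSp : ∀ p ∈ S, p.Prime := fun p hp => hPprime p (hS hp)
    have hd0 : (∏ p ∈ S, p) ≠ 0 :=
      (Finset.prod_pos (fun p hp => (hSp p hp).pos)).ne'
    have hpf : (∏ p ∈ S, p).primeFactors = S := Nat.primeFactors_prod hSp
    have hsqd : Squarefree (∏ p ∈ S, p) := squarefree_prod_primes hSp
    have hmu : ((ArithmeticFunction.moebius (∏ p ∈ S, p) : ℤ) : ℝ) ^ 2 = 1 := by
      rw [← Int.cast_pow, ArithmeticFunction.moebius_sq_eq_one_of_squarefree hsqd,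
        Int.cast_one]
    have hphi : phij j (∏ p ∈ S, p) = ∏ p ∈ S, ((p : ℝ) - (j : ℝ)) := by
      rw [phij, hpf]
    have hdisjSK : Disjoint S K := Finset.disjoint_of_subset_left hS hdisjPK
    have hSS : SSj (j + 1) ((∏ p ∈ S, p) * k)
        = (if q ∣ (∏ p ∈ S, p) * k then (1 : ℝ) else 0) * Cj (j + 1)
          * ((∏ p ∈ S, locF j p) * ∏ p ∈ K, locF j p) := by
      rw [SSj_eq, Nat.primeFactors_mul hd0 hk.ne', hpf, ← hKdef,
        Finset.prod_union hdisjSK, hqdef]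
    have hind : (if q ∣ (∏ p ∈ S, p) * k then (1 : ℝ) else 0) = ∏ p ∈ P \ S, b p := by
      by_cases hqk : q ∣ k
      · rw [if_pos (hqk.mul_left _)]
        refine (Finset.prod_eq_one fun p hp => ?_).symm
        simp [hbdef, hqk]
      · have hq1 : q ≠ 1 := fun h => hqk (h ▸ one_dvd k)
        have hqpe : q.Prime ∧ q = j + 1 := by
          rw [hqdef, pFun]
          rw [hqdef, pFun] at hq1
          split at hq1
          · next h => exact ⟨by simpa [h], by simp [h]⟩
          · exact absurd rfl hq1
        obtain ⟨hqp, hqe⟩ := hqpe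
        by_cases hqS : q ∈ S
        · have hdv : q ∣ (∏ p ∈ S, p) * k :=
            dvd_mul_of_dvd_left (Finset.dvd_prod_of_mem (fun p => p) hqS) k
          rw [if_pos hdv]
          refine (Finset.prod_eq_one fun p hp => ?_).symm
          have hne : p ≠ j + 1 := by
            intro h
            exact (Finset.mem_sdiff.mp hp).2 (by rw [h, ← hqe]; exact hqS)
          simp [hbdef, hne]
        · have hnd : ¬ q ∣ (∏ p ∈ S, p) * k := by
            intro h
            rcases (Nat.Prime.dvd_mul hqp).mp h with h1 | h2
            · rw [Prime.dvd_finset_prod_iff hqp.prime] at h1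
              obtain ⟨p, hp, hqd⟩ := h1
              exact hqS (((Nat.prime_dvd_prime_iff_eq hqp (hSp p hp)).mp hqd) ▸ hp)
            · exact hqk h2
          rw [if_neg hnd]
          have hqP : q ∈ P := by
            rcases (Nat.Prime.dvd_mul hqp).mp hqrk with h1 | h2
            · exact Finset.mem_sdiff.mpr ⟨Nat.mem_primeFactors.mpr ⟨hqp, h1, hr.ne'⟩,
                fun hK => hqk (Nat.dvd_of_mem_primeFactors hK)⟩
            · exact absurd h2 hqk
          refine (Finset.prod_eq_zero (Finset.mem_sdiff.mpr ⟨hqP, hqS⟩) ?_).symm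
          simp only [hbdef]
          rw [if_pos ⟨hqe, hqk⟩]
    rw [hmu, hphi, hSS, ← hind]
    rw [Finset.prod_div_distrib]
    by_cases hz : (∏ p ∈ S, ((p : ℝ) - (j : ℝ))) = 0
    · rw [hz]
      simp
    · field_simp
  rw [Finset.sum_congr rfl step3, ← Finset.mul_sum]
  -- step 4 : binomial expansion
  have step4 : ∑ S ∈ P.powerset,
      (∏ p ∈ S, (locF j p / ((p : ℝ) - (j : ℝ)))) * ∏ p ∈ P \ S, b p
      = ∏ p ∈ P, (locF j p / ((p : ℝ) - (j : ℝ)) + b p) :=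
    (Finset.prod_add _ _ _).symm
  rw [step4]
  -- step 5 : local identity
  have step5 : ∀ p ∈ P, locF j p / ((p : ℝ) - (j : ℝ)) + b p = locF j p := by
    intro p hp
    have hpp := hPprime p hp
    have hpnk := hPk p hp
    have hpj : p ≠ j := by
      intro h
      apply hpnk
      rw [pFun, if_pos (h ▸ hpp)] at hpk
      exact h ▸ hpk
    have hxj : (p : ℝ) ≠ (j : ℝ) := fun h => hpj (Nat.cast_injective h)
    by_cases hp1 : p = j + 1
    · have hqe : q = j + 1 := by rw [hqdef, pFun, if_pos (hp1 ▸ hpp)]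
      have hqk : ¬ q ∣ k := fun h => hpnk (by rw [hp1, ← hqe]; exact h)
      have hbp : b p = 0 := by simp [hbdef, hp1, hqk]
      have hloc : locF j p = (p : ℝ) / ((p : ℝ) - 1) := by
        rw [locF, if_pos (Or.inr hp1)]
      have hone : (p : ℝ) - (j : ℝ) = 1 := by
        rw [hp1]; push_cast; ring
      rw [hbp, hone, hloc, div_one, add_zero]
    · have hbp : b p = 1 := by simp [hbdef, hp1]
      have hloc : locF j p = 1 + 1 / ((p : ℝ) - ((j + 1 : ℕ) : ℝ)) := by
        rw [locF, if_neg (by tauto)]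
      have hx1 : (p : ℝ) - ((j + 1 : ℕ) : ℝ) ≠ 0 := by
        intro h
        apply hp1
        exact_mod_cast sub_eq_zero.mp h
      have hx0 : (p : ℝ) - (j : ℝ) ≠ 0 := sub_ne_zero.mpr hxj
      rw [hbp, hloc]
      push_cast at hx1 ⊢
      field_simp
      ring
  rw [Finset.prod_congr rfl step5]
  -- conclude
  rw [SSj_eq, if_pos (by rw [← hqdef]; exact hqrk), one_mul,
    Nat.primeFactors_mul hr.ne' hk.ne', ← hKdef,
    ← Finset.sdiff_union_self_eq_union, ← hPdef, Finset.prod_union hdisjPK]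
  ring
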